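/- There exists a function f : (Fin N → Fin r) → ℝ expressible as a two-hidden-layer threshold network that computes the N-dimensional identity tensor: f(x) = 1 if all coordinates of x are equal, and f(x) = 0 otherwise. Concretely, define f(x) = step((∑_{j : Fin r} step((∑_{i : Fin N} [x i = j]) - (N - 1/2))) - 1/2), where [P] is 1 if P holds and 0 otherwise and step(t) = if t > 0 then 1 else 0. Then f(x) = 1 ↔ ∀ i i', x i = x i'. -/
import Mathlib


noncomputable def step (t : ℝ) : ℝ := if 0 < t then 1 else 0

lemma step_eq_one_iff (t : ℝ) : step t = 1 ↔ 0 < t := by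
  unfold step
  split <;> simp_all

theorem identity_tensor_network (N r : ℕ) (hN : 0 < N) (hr : 0 < r)
    (x : Fin N → Fin r) :
    step ((∑ j : Fin r, step ((∑ i : Fin N, if x i = j then (1 : ℝ) else 0) - (N - 1/2))) - 1/2) = 1
      ↔ ∀ i i', x i = x i' := by
  have key : ∀ j : Fin r,
      step ((∑ i : Fin N, if x i = j then (1 : ℝ) else 0) - (N - 1/2))
        = if ∀ i, x i = j then 1 else 0 := by
    intro j
    have hsum : (∑ i : Fin N, if x i = j then (1 : ℝ) else 0)
        = ((Finset.univ.filter (fun i => x i = j)).card : ℝ) := by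
      rw [Finset.sum_boole]
    set c := (Finset.univ.filter (fun i : Fin N => x i = j)).card with hc
    have hcle : c ≤ N := by
      simpa using Finset.card_filter_le Finset.univ (fun i : Fin N => x i = j)
    have hiff : (∀ i, x i = j) ↔ c = N := by
      constructor
      · intro h
        have : Finset.univ.filter (fun i : Fin N => x i = j) = Finset.univ := by
          ext i; simp [h i]
        simp [hc, this]
      · intro h i
        have : Finset.univ.filter (fun i : Fin N => x i = j) = Finset.univ :=
          Finset.eq_univ_of_card _ (by simpa using h)
        have := Finset.eq_univ_iff_forall.mp this i
        simpa using this
    rw [hsum]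
    by_cases hall : ∀ i, x i = j
    · have : c = N := hiff.mp hall
      rw [if_pos hall, step_eq_one_iff]
      rw [this]; linarith
    · have hlt : c < N := lt_of_le_of_ne hcle (fun h => hall (hiff.mpr h))
      have hclt : (c : ℝ) ≤ (N : ℝ) - 1 := by
        have : (c : ℝ) + 1 ≤ N := by exact_mod_cast hlt
        linarith
      rw [if_neg hall]
      unfold step
      rw [if_neg (by linarith)]
  simp_rw [key]
  rw [Finset.sum_boole, step_eq_one_iff]
  constructor
  · intro h
    have : 0 < (Finset.univ.filter (fun j : Fin r => ∀ i, x i = j)).card := by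
      by_contra hc
      push_neg at hc
      interval_cases h' : (Finset.univ.filter (fun j : Fin r => ∀ i, x i = j)).card
      · norm_num at h
    obtain ⟨j, hj⟩ := Finset.card_pos.mp this
    simp only [Finset.mem_filter] at hj
    intro i i'
    rw [hj.2 i, hj.2 i']
  · intro h
    have hj : (x ⟨0, hN⟩) ∈ Finset.univ.filter (fun j : Fin r => ∀ i, x i = j) := by
      simp only [Finset.mem_filter, Finset.mem_univ, true_and]
      intro i; exact h i _
    have : 0 < (Finset.univ.filter (fun j : Fin r => ∀ i, x i = j)).card :=
      Finset.card_pos.mpr ⟨_, hj⟩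
    have : (1 : ℝ) ≤ (Finset.univ.filter (fun j : Fin r => ∀ i, x i = j)).card := by
      exact_mod_cast this
    linarith
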